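/- Let k be a positive integer, B ∈ ℤ^{k×k} a matrix with det(B) ≠ 0, and M ∈ ℚ^{k×k} a matrix such that M·B has integer entries, so that ψ : Bℤ^k → ℤ^k, z ↦ Mz, is a well-defined group homomorphism from the finite-index subgroup Bℤ^k of ℤ^k to ℤ^k. Suppose det(I_k − M) ≠ 0. Then the equivalence relation on ℤ^k defined by z₁ ∼_ψ z₂ iff there exists w ∈ Bℤ^k with z₁ = w + z₂ − ψ(w) has exactly [ℤ^k : Bℤ^k]·|det(I_k − M)| = |det(B)|·|det(I_k − M)| equivalence classes. -/

import Mathlib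

open Matrix

lemma index_range_mulVecLin {k : ℕ} (A : Matrix (Fin k) (Fin k) ℤ) (hA : A.det ≠ 0) :
    (LinearMap.range (Matrix.toLin' A)).toAddSubgroup.index = A.det.natAbs := by
  classical
  set N := LinearMap.range (Matrix.toLin' A) with hN
  have hinj : Function.Injective (Matrix.toLin' A) := by
    intro x y hxy
    have h2 : A.adjugate.mulVec (A.mulVec x) = A.adjugate.mulVec (A.mulVec y) := by
      simpa [Matrix.toLin'_apply] using congrArg (A.adjugate.mulVec) hxy
    rw [Matrix.mulVec_mulVec, Matrix.mulVec_mulVec, Matrix.adjugate_mul,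
      Matrix.smul_mulVec, Matrix.smul_mulVec, Matrix.one_mulVec,
      Matrix.one_mulVec] at h2
    exact smul_right_injective _ hA h2
  obtain ⟨n, snf⟩ := N.smithNormalForm (Pi.basisFun ℤ (Fin k))
  let e : (Fin k → ℤ) ≃ₗ[ℤ] N := LinearEquiv.ofInjective (Matrix.toLin' A) hinj
  have hn : n = k := by
    have h1 : Module.finrank ℤ N = n := by
      rw [Module.finrank_eq_card_basis snf.bN, Fintype.card_fin]
    have h2 : Module.finrank ℤ N = k := by
      rw [← LinearEquiv.finrank_eq e, Module.finrank_pi, Fintype.card_fin]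
    rw [← h1, h2]
  subst hn
  -- index = product of |a i|
  have hidx : N.toAddSubgroup.index = ∏ i, (snf.a i).natAbs := by
    rw [snf.toAddSubgroup_index_eq_pow_mul_prod]
    simp [Ideal.span_singleton_toAddSubgroup_eq_zmultiples, Int.index_zmultiples]
  -- the determinant
  let ψ : (Fin n → ℤ) ≃ₗ[ℤ] N := snf.bM.equivFun.trans snf.bN.equivFun.symm
  let g : (Fin n → ℤ) →ₗ[ℤ] (Fin n → ℤ) := N.subtype ∘ₗ ψ.toLinearMap
  have hfact : Matrix.toLin' A = g ∘ₗ (e.trans ψ.symm).toLinearMap := by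
    apply LinearMap.ext
    intro x
    have h0 : (g ∘ₗ (e.trans ψ.symm).toLinearMap) x = N.subtype (ψ (ψ.symm (e x))) := rfl
    rw [h0, LinearEquiv.apply_symm_apply]
    rfl
  let σ : Equiv.Perm (Fin n) := Equiv.ofBijective snf.f
    (Finite.injective_iff_bijective.mp snf.f.injective)
  have hg : LinearMap.toMatrix snf.bM snf.bM g = (Matrix.diagonal snf.a).submatrix σ.symm id := by
    ext i j
    rw [LinearMap.toMatrix_apply]
    have : g (snf.bM j) = (snf.a j) • snf.bM (snf.f j) := by
      have h1 : ψ (snf.bM j) = snf.bN j := by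
        simp [ψ, Module.Basis.equivFun_apply, Module.Basis.equivFun_symm_apply, Finsupp.single_apply,
          ite_smul, Finset.sum_ite_eq]
      simp [g, h1, snf.snf j]
    rw [this, _root_.map_smul, snf.bM.repr_self]
    simp only [Matrix.submatrix_apply, Matrix.diagonal_apply, id_eq,
      Finsupp.smul_apply, Finsupp.single_apply, smul_eq_mul]
    rcases eq_or_ne (σ.symm i) j with h | h
    · rw [if_pos h, if_pos]
      · rw [h, mul_one]
      · rw [← h]; exact σ.apply_symm_apply i
    · rw [if_neg h, if_neg, mul_zero]
      intro hc
      apply h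
      rw [Equiv.symm_apply_eq]
      simpa [σ] using hc.symm
  have hdetg : LinearMap.det g = (Equiv.Perm.sign σ.symm : ℤ) * ∏ i, snf.a i := by
    rw [← LinearMap.det_toMatrix snf.bM, hg]
    rw [Matrix.det_permute σ.symm (Matrix.diagonal snf.a), Matrix.det_diagonal]
    norm_cast
  have hdetA : A.det = LinearMap.det g * LinearMap.det (e.trans ψ.symm).toLinearMap := by
    rw [← LinearMap.det_toLin' A, hfact, LinearMap.det_comp]
  have hu : (LinearMap.det (e.trans ψ.symm).toLinearMap).natAbs = 1 := by
    rcases Int.isUnit_iff.mp (LinearEquiv.isUnit_det' (e.trans ψ.symm)) with h | h <;> rw [h] <;> rfl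
  have habs : (∏ i, snf.a i).natAbs = ∏ i, (snf.a i).natAbs :=
    map_prod Int.natAbsHom snf.a Finset.univ
  rw [hidx, hdetA, Int.natAbs_mul, hu, mul_one, hdetg, Int.natAbs_mul, habs]
  rcases Int.units_eq_one_or (Equiv.Perm.sign σ.symm) with h | h <;> simp [h]



/-- Proposition 4.4 of the paper, the case `det(I − M) ≠ 0`.
Let `k` be a positive integer, `B ∈ ℤ^{k×k}` with `det B ≠ 0`, and `M ∈ ℚ^{k×k}` such that
`M·B` has integer entries (witnessed by the integral matrix `C`), so that
`ψ : Bℤᵏ → ℤᵏ, z ↦ Mz` is a well-defined homomorphism; on `Bℤᵏ` it is given by `Bv ↦ Cv`.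
Suppose `det(Iₖ − M) ≠ 0`.  Then the equivalence relation on `ℤᵏ` defined by
`z₁ ∼ z₂ ↔ ∃ w ∈ Bℤᵏ, z₁ = w + z₂ − ψ(w)` has exactly `|det B|·|det(Iₖ − M)|`
equivalence classes. -/
theorem reidemeister_abelian_finite
    (k : ℕ) (hk : 0 < k)
    (B : Matrix (Fin k) (Fin k) ℤ) (hB : B.det ≠ 0)
    (M : Matrix (Fin k) (Fin k) ℚ)
    (C : Matrix (Fin k) (Fin k) ℤ)
    (hC : M * B.map (Int.cast : ℤ → ℚ) = C.map (Int.cast : ℤ → ℚ))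
    (hM : (1 - M).det ≠ 0) :
    Finite (Quot (fun z₁ z₂ : Fin k → ℤ =>
        ∃ v : Fin k → ℤ, z₁ = B.mulVec v + z₂ - C.mulVec v)) ∧
    (Nat.card (Quot (fun z₁ z₂ : Fin k → ℤ =>
        ∃ v : Fin k → ℤ, z₁ = B.mulVec v + z₂ - C.mulVec v)) : ℚ)
      = |(B.det : ℚ)| * |(1 - M).det| := by
  classical
  -- determinant identity over ℚ
  have hmap : (B - C).map (Int.cast : ℤ → ℚ) = (1 - M) * B.map (Int.cast : ℤ → ℚ) := by
    rw [sub_mul, one_mul, hC]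
    ext i j
    simp [Matrix.sub_apply]
  have h1 := RingHom.map_det (Int.castRingHom ℚ) (B - C)
  have h2 := RingHom.map_det (Int.castRingHom ℚ) B
  rw [RingHom.mapMatrix_apply] at h1 h2
  have hdetQ : (((B - C).det : ℤ) : ℚ) = (1 - M).det * (B.det : ℚ) := by
    have : ((B - C).map (Int.cast : ℤ → ℚ)).det = (1 - M).det * (B.det : ℚ) := by
      rw [hmap, Matrix.det_mul]
      congr 1
      exact h2.symm
    rw [← this]
    exact h1
  have hAdet : (B - C).det ≠ 0 := by
    intro h
    rw [h] at hdetQ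
    exact mul_ne_zero hM (Int.cast_ne_zero.mpr hB) (by exact_mod_cast hdetQ.symm)
  -- identify the quotient with the group quotient
  set H : AddSubgroup (Fin k → ℤ) :=
    (LinearMap.range (Matrix.toLin' (B - C))).toAddSubgroup with hH
  have hr : ∀ z₁ z₂ : Fin k → ℤ,
      (∃ v : Fin k → ℤ, z₁ = B.mulVec v + z₂ - C.mulVec v) ↔
        (QuotientAddGroup.leftRel H) z₁ z₂ := by
    intro z₁ z₂
    rw [QuotientAddGroup.leftRel_apply]
    constructor
    · rintro ⟨v, rfl⟩
      refine ⟨-v, ?_⟩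
      rw [Matrix.toLin'_apply, Matrix.mulVec_neg, Matrix.sub_mulVec]
      abel
    · rintro ⟨v, hv⟩
      refine ⟨-v, ?_⟩
      rw [Matrix.toLin'_apply, Matrix.sub_mulVec] at hv
      rw [Matrix.mulVec_neg, Matrix.mulVec_neg]
      linear_combination hv
  let E : Quot (fun z₁ z₂ : Fin k → ℤ =>
      ∃ v : Fin k → ℤ, z₁ = B.mulVec v + z₂ - C.mulVec v) ≃ ((Fin k → ℤ) ⧸ H) :=
    Quot.congrRight hr
  have hcard : Nat.card (Quot (fun z₁ z₂ : Fin k → ℤ =>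
      ∃ v : Fin k → ℤ, z₁ = B.mulVec v + z₂ - C.mulVec v)) = (B - C).det.natAbs := by
    rw [Nat.card_congr E, ← AddSubgroup.index_eq_card, hH, index_range_mulVecLin _ hAdet]
  have hfin : Finite (Quot (fun z₁ z₂ : Fin k → ℤ =>
      ∃ v : Fin k → ℤ, z₁ = B.mulVec v + z₂ - C.mulVec v)) := by
    have : Nat.card (Quot (fun z₁ z₂ : Fin k → ℤ =>
        ∃ v : Fin k → ℤ, z₁ = B.mulVec v + z₂ - C.mulVec v)) ≠ 0 := by
      rw [hcard]
      simpa using hAdet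
    exact (Nat.card_ne_zero.mp this).2
  refine ⟨hfin, ?_⟩
  rw [hcard]
  rw [Nat.cast_natAbs, Int.cast_abs, hdetQ, abs_mul, mul_comm]
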